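/- arXiv:1204.5810 — 6 statements merged into one kernel-verified Lean document; each statement's English description precedes it below -/
import Mathlib

section
/- In the packing LP setting, let ε ∈ (0,1], let p ∈ ℝ^m with p ≥ 0, and let x = x(p). Suppose (i) a_i(x) ≤ B for all i ∈ {1,…,m}, and (ii) a_i(x) ≥ (1 − 3ε)B for every i with p_i > 0. Then ∑_{t=1}^n π_t x_t ≥ (1 − 3ε)·OPT. -/
open Finset

noncomputable section

/-- The linear classification induced by dual prices `p`. -/
def classif {n m : ℕ} (π : Fin n → ℝ) (a : Fin n → Fin m → ℝ) (p : Fin m → ℝ) :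
    Finset (Fin n) :=
  Finset.univ.filter fun t => ∑ i, p i * a t i < π t

/-- Occupation of row `i` by the index set `x`. -/
def occ {n m : ℕ} (a : Fin n → Fin m → ℝ) (i : Fin m) (x : Finset (Fin n)) : ℝ :=
  ∑ t ∈ x, a t i

/-- Optimal value of the offline packing LP. -/
def OPTval (n m : ℕ) (π : Fin n → ℝ) (a : Fin n → Fin m → ℝ) (B : ℝ) : ℝ :=
  sSup {v : ℝ | ∃ y : Fin n → ℝ, (∀ t, y t ∈ Set.Icc (0:ℝ) 1) ∧
    (∀ i, ∑ t, a t i * y t ≤ B) ∧ v = ∑ t, π t * y t}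

/-- Approximate complementary slackness implies near-optimal value: if the
classification `x = x(p)` with `p ≥ 0` is feasible and nearly saturates every
budget whose price is positive, then its value is at least `(1−3ε)·OPT`. -/
theorem approximate_complementary_slackness
    (n m : ℕ) (hn : 1 ≤ n) (hm : 1 ≤ m)
    (π : Fin n → ℝ) (hπ : ∀ t, 0 ≤ π t)
    (a : Fin n → Fin m → ℝ) (ha : ∀ t i, a t i ∈ Set.Icc (0:ℝ) 1)
    (ha0 : ∀ t, a t ≠ 0)
    (B : ℝ) (hB : 0 < B)
    (ε : ℝ) (hε : ε ∈ Set.Ioc (0:ℝ) 1)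
    (p : Fin m → ℝ) (hp : ∀ i, 0 ≤ p i)
    (hfeas : ∀ i, occ a i (classif π a p) ≤ B)
    (hsat : ∀ i, 0 < p i → (1 - 3 * ε) * B ≤ occ a i (classif π a p)) :
    (1 - 3 * ε) * OPTval n m π a B ≤ ∑ t ∈ classif π a p, π t := by
  set c : ℝ := 1 - 3 * ε with hc
  set x := classif π a p with hx
  set V := ∑ t ∈ x, π t with hV
  have hV0 : 0 ≤ V := Finset.sum_nonneg fun t _ => hπ t
  set q : Fin n → ℝ := fun t => ∑ i, p i * a t i with hqdef
  have hq0 : ∀ t, 0 ≤ q t := fun t =>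
    Finset.sum_nonneg fun i _ => mul_nonneg (hp i) (ha t i).1
  -- key: for any feasible y, c * value(y) ≤ V
  have key : ∀ y : Fin n → ℝ, (∀ t, y t ∈ Set.Icc (0:ℝ) 1) →
      (∀ i, ∑ t, a t i * y t ≤ B) → c * ∑ t, π t * y t ≤ V := by
    intro y hy hyfeas
    by_cases hcpos : 0 < c
    case neg =>
      have hc0 : c ≤ 0 := le_of_not_gt hcpos
      have : c * ∑ t, π t * y t ≤ 0 :=
        mul_nonpos_of_nonpos_of_nonneg hc0
          (Finset.sum_nonneg fun t _ => mul_nonneg (hπ t) (hy t).1)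
      linarith
    have hcy01 : ∀ t, 0 ≤ c * y t ∧ c * y t ≤ 1 := by
      intro t
      constructor
      · exact mul_nonneg hcpos.le (hy t).1
      · have : c ≤ 1 := by have := hε.1; simp [hc]; linarith
        calc c * y t ≤ 1 * 1 := by
              apply mul_le_mul this (hy t).2 (hy t).1 zero_le_one
          _ = 1 := by ring
    have h1 : ∑ t, (π t - q t) * (c * y t) ≤ ∑ t ∈ x, (π t - q t) := by
      rw [hx, classif, Finset.sum_filter]
      apply Finset.sum_le_sum
      intro t _
      by_cases ht : q t < π t
      · rw [if_pos ht]
        have : (π t - q t) * (c * y t) ≤ (π t - q t) * 1 :=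
          mul_le_mul_of_nonneg_left (hcy01 t).2 (by linarith)
        simpa using this
      · rw [if_neg ht]
        exact mul_nonpos_of_nonpos_of_nonneg (by push_neg at ht; linarith) (hcy01 t).1
    have h2 : ∑ t, q t * (c * y t) ≤ ∑ t ∈ x, q t := by
      have e1 : ∑ t, q t * (c * y t) = ∑ i, c * (p i * ∑ t, a t i * y t) := by
        simp only [hqdef, Finset.sum_mul]
        rw [Finset.sum_comm]
        congr 1; ext i
        rw [Finset.mul_sum, Finset.mul_sum]
        congr 1; ext t; ring
      have e2 : ∑ t ∈ x, q t = ∑ i, p i * occ a i x := by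
        simp only [hqdef, occ]
        rw [Finset.sum_comm]
        congr 1; ext i
        rw [Finset.mul_sum]
      rw [e1, e2]
      apply Finset.sum_le_sum
      intro i _
      rcases eq_or_lt_of_le (hp i) with h | h
      · simp [← h]
      · have hs := hsat i h
        have : c * (p i * ∑ t, a t i * y t) ≤ c * (p i * B) := by
          apply mul_le_mul_of_nonneg_left _ hcpos.le
          exact mul_le_mul_of_nonneg_left (hyfeas i) (hp i)
        calc c * (p i * ∑ t, a t i * y t) ≤ c * (p i * B) := this
          _ = p i * (c * B) := by ring
          _ ≤ p i * occ a i x := mul_le_mul_of_nonneg_left hs (hp i)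
    calc c * ∑ t, π t * y t
        = ∑ t, ((π t - q t) * (c * y t) + q t * (c * y t)) := by
          rw [Finset.mul_sum]; congr 1; ext t; ring
      _ = ∑ t, (π t - q t) * (c * y t) + ∑ t, q t * (c * y t) :=
          Finset.sum_add_distrib
      _ ≤ (∑ t ∈ x, (π t - q t)) + ∑ t ∈ x, q t := add_le_add h1 h2
      _ = V := by rw [Finset.sum_sub_distrib]; ring
  -- now bound the sSup
  by_cases hcpos : 0 < c
  case neg =>
    have hc0 : c ≤ 0 := le_of_not_gt hcpos
    have hOPT0 : 0 ≤ OPTval n m π a B := by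
      apply le_csSup
      · refine ⟨∑ t, π t, ?_⟩
        rintro v ⟨y, hy, hyfeas, rfl⟩
        apply Finset.sum_le_sum
        intro t _
        calc π t * y t ≤ π t * 1 := mul_le_mul_of_nonneg_left (hy t).2 (hπ t)
          _ = π t := mul_one _
      · exact ⟨0, fun t => ⟨le_refl 0, zero_le_one⟩,
          fun i => by simpa using hB.le, by simp⟩
    calc c * OPTval n m π a B ≤ 0 := mul_nonpos_of_nonpos_of_nonneg hc0 hOPT0
      _ ≤ V := hV0
  have hle : OPTval n m π a B ≤ V / c := by
    apply Real.sSup_le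
    · rintro v ⟨y, hy, hyfeas, rfl⟩
      rw [le_div_iff₀ hcpos, mul_comm]
      exact key y hy hyfeas
    · exact div_nonneg hV0 hcpos.le
  calc c * OPTval n m π a B ≤ c * (V / c) :=
      mul_le_mul_of_nonneg_left hle hcpos.le
    _ = V := by field_simp

end
end

section
/- In the packing LP setting, let p ∈ ℝ^m with p ≥ 0 and let x = x(p). Then x is an optimal solution of the modified LP: maximize ∑_{t=1}^n π_t y_t subject to ∑_{t=1}^n a^t_i y_t ≤ a_i(x) for every i ∈ {1,…,m} and y ∈ [0,1]^n. In particular, x maximizes the Lagrangian L(p,y) = ∑_t π_t y_t − ∑_{i=1}^m p_i (∑_t a^t_i y_t − a_i(x)) over y ∈ [0,1]^n. -/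
open Finset

noncomputable section

/-- `x(p)` is an optimal solution of the modified LP whose right-hand sides are
its own budget occupations `a_i(x(p))`, and in particular it maximizes the
Lagrangian `L(p, ·)` over `[0,1]^n`. -/
theorem classification_optimal_for_modified_LP
    (n m : ℕ) (hn : 1 ≤ n) (hm : 1 ≤ m)
    (π : Fin n → ℝ) (hπ : ∀ t, 0 ≤ π t)
    (a : Fin n → Fin m → ℝ) (ha : ∀ t i, a t i ∈ Set.Icc (0:ℝ) 1)
    (ha0 : ∀ t, a t ≠ 0)
    (p : Fin m → ℝ) (hp : ∀ i, 0 ≤ p i) :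
    let x : Finset (Fin n) := classif π a p
    let xvec : Fin n → ℝ := fun t => if t ∈ x then 1 else 0
    ((∀ t, xvec t ∈ Set.Icc (0:ℝ) 1) ∧
      (∀ i, ∑ t, a t i * xvec t ≤ occ a i x) ∧
      (∀ y : Fin n → ℝ, (∀ t, y t ∈ Set.Icc (0:ℝ) 1) →
        (∀ i, ∑ t, a t i * y t ≤ occ a i x) →
        ∑ t, π t * y t ≤ ∑ t, π t * xvec t)) ∧
    (∀ y : Fin n → ℝ, (∀ t, y t ∈ Set.Icc (0:ℝ) 1) →
      (∑ t, π t * y t) - ∑ i, p i * ((∑ t, a t i * y t) - occ a i x) ≤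
        (∑ t, π t * xvec t) - ∑ i, p i * ((∑ t, a t i * xvec t) - occ a i x)) := by
  intro x xvec
  set c : Fin n → ℝ := fun t => ∑ i, p i * a t i with hc
  -- the fractional vector xvec sums back to the occupation
  have hxocc : ∀ i, ∑ t, a t i * xvec t = occ a i x := by
    intro i
    simp only [xvec, mul_ite, mul_one, mul_zero, occ]
    rw [Finset.sum_ite_mem, Finset.univ_inter]
  -- exchanging the order of summation
  have swap : ∀ y : Fin n → ℝ,
      ∑ i, p i * (∑ t, a t i * y t) = ∑ t, c t * y t := by
    intro y
    simp_rw [hc, Finset.mul_sum, Finset.sum_mul, mul_assoc]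
    exact Finset.sum_comm
  -- membership characterization
  have hmem : ∀ t, t ∈ x ↔ c t < π t := by
    intro t; simp [x, classif, hc]
  -- the Lagrangian claim
  have lag : ∀ y : Fin n → ℝ, (∀ t, y t ∈ Set.Icc (0:ℝ) 1) →
      (∑ t, π t * y t) - ∑ i, p i * ((∑ t, a t i * y t) - occ a i x) ≤
        (∑ t, π t * xvec t) - ∑ i, p i * ((∑ t, a t i * xvec t) - occ a i x) := by
    intro y hy
    have expand : ∀ z : Fin n → ℝ,
        (∑ t, π t * z t) - ∑ i, p i * ((∑ t, a t i * z t) - occ a i x) =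
        (∑ t, (π t - c t) * z t) + ∑ i, p i * occ a i x := by
      intro z
      have h5 : ∑ t, (π t - c t) * z t =
          ∑ t, π t * z t - ∑ t, c t * z t := by
        simp_rw [sub_mul]; rw [Finset.sum_sub_distrib]
      rw [h5, ← swap]
      simp_rw [mul_sub]
      rw [Finset.sum_sub_distrib]
      ring
    rw [expand, expand]
    refine add_le_add ?_ le_rfl
    apply Finset.sum_le_sum
    intro t _
    by_cases htx : t ∈ x
    · have h1 : 0 ≤ π t - c t := le_of_lt (sub_pos.mpr ((hmem t).mp htx))
      have : xvec t = 1 := by simp [xvec, htx]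
      rw [this, mul_one]
      nlinarith [(hy t).2]
    · have h1 : π t - c t ≤ 0 := by
        have := (hmem t).not.mp htx
        linarith [not_lt.mp this]
      have : xvec t = 0 := by simp [xvec, htx]
      rw [this, mul_zero]
      exact mul_nonpos_of_nonpos_of_nonneg h1 (hy t).1
  refine ⟨⟨?_, ?_, ?_⟩, lag⟩
  · intro t
    constructor
    · positivity
    · simp only [xvec]; split <;> norm_num
  · intro i; rw [hxocc i]
  · intro y hy hfeas
    have h1 := lag y hy
    have h2 : ∀ i, p i * ((∑ t, a t i * y t) - occ a i x) ≤ 0 := by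
      intro i
      exact mul_nonpos_of_nonneg_of_nonpos (hp i) (by linarith [hfeas i])
    have h3 : ∑ i, p i * ((∑ t, a t i * y t) - occ a i x) ≤ 0 :=
      Finset.sum_nonpos fun i _ => h2 i
    have h4 : ∑ i, p i * ((∑ t, a t i * xvec t) - occ a i x) = 0 := by
      apply Finset.sum_eq_zero
      intro i _
      rw [hxocc i]; ring
    linarith

end
end

section
/- In the packing LP setting with general position, let ε ∈ (0,1] with εn an integer and assume ε²B ≥ m. Let S ⊆ {1,…,n} with |S| = εn. Suppose p ∈ ℝ^m with p ≥ 0 and α = (α_t)_{t∈S} with α ≥ 0 satisfy p·a^t + α_t ≥ π_t for all t ∈ S, and suppose x* ∈ [0,1]^S satisfies ∑_{t∈S} a^t_i x*_t ≤ ε(1−ε)B for all i, together with the complementary slackness conditions: x*_t = 0 whenever p·a^t + α_t > π_t; x*_t = 1 whenever α_t > 0; and ∑_{t∈S} a^t_i x*_t = ε(1−ε)B for every i with p_i > 0. Then a_i^S(x(p)) ≤ (1 − ε)B for all i ∈ {1,…,m}, and a_i^S(x(p)) ≥ (1 − 2ε)B for every i with p_i > 0. -/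
open Finset

noncomputable section

/-- Sampled complementary slackness: if `(p, α)` is dual feasible for the
sampled LP and is in complementary slackness with a primal feasible `x*`, then
the classification `x(p)` satisfies `a_i^S(x(p)) ≤ (1−ε)B` for all rows `i`,
and `a_i^S(x(p)) ≥ (1−2ε)B` for every row with `p_i > 0`. -/
theorem sampled_complementary_slackness
    (n m : ℕ) (hn : 1 ≤ n) (hm : 1 ≤ m)
    (π : Fin n → ℝ) (hπ : ∀ t, 0 ≤ π t)
    (a : Fin n → Fin m → ℝ) (ha : ∀ t i, a t i ∈ Set.Icc (0:ℝ) 1)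
    (ha0 : ∀ t, a t ≠ 0)
    (B : ℝ) (hB : 0 < B)
    (hgen : ∀ p : Fin m → ℝ,
      (Finset.univ.filter fun t => π t = ∑ i, p i * a t i).card ≤ m)
    (ε : ℝ) (hε : ε ∈ Set.Ioc (0:ℝ) 1)
    (k : ℕ) (hk : (k : ℝ) = ε * n)
    (hεB : (m : ℝ) ≤ ε ^ 2 * B)
    (S : Finset (Fin n)) (hS : S.card = k)
    (p : Fin m → ℝ) (hp : ∀ i, 0 ≤ p i)
    (α : Fin n → ℝ) (hα : ∀ t ∈ S, 0 ≤ α t)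
    (hdual : ∀ t ∈ S, π t ≤ ∑ i, p i * a t i + α t)
    (xstar : Fin n → ℝ) (hx01 : ∀ t ∈ S, xstar t ∈ Set.Icc (0:ℝ) 1)
    (hxfeas : ∀ i, ∑ t ∈ S, a t i * xstar t ≤ ε * (1 - ε) * B)
    (hcs1 : ∀ t ∈ S, π t < ∑ i, p i * a t i + α t → xstar t = 0)
    (hcs2 : ∀ t ∈ S, 0 < α t → xstar t = 1)
    (hcs3 : ∀ i, 0 < p i → ∑ t ∈ S, a t i * xstar t = ε * (1 - ε) * B) :
    (∀ i, (1 / ε) * ∑ t ∈ classif π a p ∩ S, a t i ≤ (1 - ε) * B) ∧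
    (∀ i, 0 < p i → (1 - 2 * ε) * B ≤ (1 / ε) * ∑ t ∈ classif π a p ∩ S, a t i) := by
  obtain ⟨hε0, hε1⟩ := hε
  have hmem : ∀ t ∈ classif π a p ∩ S, xstar t = 1 := by
    intro t ht
    rw [Finset.mem_inter] at ht
    obtain ⟨htc, htS⟩ := ht
    have htc' : ∑ i, p i * a t i < π t := by
      simpa [classif] using htc
    exact hcs2 t htS (by linarith [hdual t htS])
  constructor
  · intro i
    have h1 : ∑ t ∈ classif π a p ∩ S, a t i
        = ∑ t ∈ classif π a p ∩ S, a t i * xstar t :=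
      Finset.sum_congr rfl fun t ht => by rw [hmem t ht, mul_one]
    have h2 : ∑ t ∈ classif π a p ∩ S, a t i * xstar t ≤ ∑ t ∈ S, a t i * xstar t :=
      Finset.sum_le_sum_of_subset_of_nonneg Finset.inter_subset_right
        (fun t htS _ => mul_nonneg (ha t i).1 (hx01 t htS).1)
    have h3 := hxfeas i
    rw [h1, one_div, inv_mul_le_iff₀ hε0]
    nlinarith
  · intro i hpi
    set T := Finset.univ.filter fun t => π t = ∑ i, p i * a t i with hTdef
    have hT : (T.card : ℝ) ≤ (m : ℝ) := by exact_mod_cast hgen p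
    have hsplit : ∑ t ∈ S, a t i * xstar t
        = ∑ t ∈ S ∩ classif π a p, a t i * xstar t
          + ∑ t ∈ S \ classif π a p, a t i * xstar t :=
      (Finset.sum_inter_add_sum_sdiff S _ _).symm
    have h1 : ∑ t ∈ S ∩ classif π a p, a t i * xstar t
        = ∑ t ∈ classif π a p ∩ S, a t i := by
      rw [Finset.inter_comm]
      exact Finset.sum_congr rfl fun t ht => by rw [hmem t ht, mul_one]
    have h2 : ∑ t ∈ S \ classif π a p, a t i * xstar t ≤ (T.card : ℝ) := by
      have heq : ∑ t ∈ (S \ classif π a p) ∩ T, a t i * xstar t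
          = ∑ t ∈ S \ classif π a p, a t i * xstar t := by
        apply Finset.sum_subset Finset.inter_subset_left
        intro t ht htT
        rw [Finset.mem_inter] at htT
        have htS : t ∈ S := (Finset.mem_sdiff.mp ht).1
        have htc : ¬ (∑ i, p i * a t i < π t) := by
          have := (Finset.mem_sdiff.mp ht).2
          simpa [classif] using this
        have hx0 : xstar t = 0 := by
          by_contra hne
          apply htT
          refine ⟨ht, ?_⟩
          rw [hTdef, Finset.mem_filter]
          refine ⟨Finset.mem_univ t, ?_⟩
          have h3 : ¬ (π t < ∑ i, p i * a t i + α t) := fun h => hne (hcs1 t htS h)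
          push_neg at h3 htc
          linarith [hdual t htS, hα t htS]
        rw [hx0, mul_zero]
      calc ∑ t ∈ S \ classif π a p, a t i * xstar t
          = ∑ t ∈ (S \ classif π a p) ∩ T, a t i * xstar t := heq.symm
        _ ≤ ∑ _t ∈ (S \ classif π a p) ∩ T, (1:ℝ) := by
            apply Finset.sum_le_sum
            intro t ht
            have htS : t ∈ S := (Finset.mem_sdiff.mp (Finset.mem_inter.mp ht).1).1
            exact mul_le_one₀ (ha t i).2 (hx01 t htS).1 (hx01 t htS).2
        _ ≤ (T.card : ℝ) := by
            rw [Finset.sum_const, nsmul_eq_mul, mul_one]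
            exact_mod_cast Finset.card_le_card Finset.inter_subset_right
    have h3 := hcs3 i hpi
    rw [one_div, le_inv_mul_iff₀ hε0]
    nlinarith

end
end

section
/- Let Y_1,…,Y_n be real numbers in [0,1], let 1 ≤ s ≤ n, let μ = (1/n)∑_{i=1}^n Y_i, let S be a uniformly random s-element subset of {1,…,n}, and let Y_S = ∑_{i∈S} Y_i. Then for every τ > 0, Pr( |Y_S − sμ| ≥ τ ) ≤ 2·exp( −τ² / (4sμ + τ) ). -/
open Finset

set_option linter.unusedSectionVars false
set_option linter.unusedVariables false
set_option maxHeartbeats 1000000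


section Esymm
variable {ι : Type*} [DecidableEq ι]

lemma bsw_esymm_nonneg (a : ι → ℝ) (ha : ∀ i, 0 ≤ a i) (k : ℕ) (T : Finset ι) :
    0 ≤ ∑ S ∈ T.powersetCard k, ∏ i ∈ S, a i :=
  Finset.sum_nonneg fun S _ => Finset.prod_nonneg fun i _ => ha i

lemma bsw_esymm_insert (a : ι → ℝ) {j : ι} {U : Finset ι} (hj : j ∉ U) (k : ℕ) :
    ∑ S ∈ (insert j U).powersetCard (k+1), ∏ i ∈ S, a i
      = (∑ S ∈ U.powersetCard (k+1), ∏ i ∈ S, a i)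
        + a j * ∑ S ∈ U.powersetCard k, ∏ i ∈ S, a i := by
  have hdisj : Disjoint (U.powersetCard (k+1)) ((U.powersetCard k).image (insert j)) := by
    rw [Finset.disjoint_right]
    rintro S hS hS'
    obtain ⟨R, hR, rfl⟩ := Finset.mem_image.1 hS
    exact hj ((Finset.mem_powersetCard.1 hS').1 (Finset.mem_insert_self _ _))
  rw [Finset.powersetCard_succ_insert hj, Finset.sum_union hdisj, Finset.sum_image, Finset.mul_sum]
  · congr 1
    refine Finset.sum_congr rfl fun S hS => ?_
    have hjS : j ∉ S := fun hh => hj ((Finset.mem_powersetCard.1 hS).1 hh)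
    rw [Finset.prod_insert hjS]
  · intro S hS S' hS' h
    have hjS : j ∉ S := fun hh => hj ((Finset.mem_powersetCard.1 hS).1 hh)
    have hjS' : j ∉ S' := fun hh => hj ((Finset.mem_powersetCard.1 hS').1 hh)
    rw [← Finset.erase_insert hjS, ← Finset.erase_insert hjS', h]

lemma bsw_esymm_erase_mono (a : ι → ℝ) (ha : ∀ i, 0 ≤ a i) {T : Finset ι} {i j : ι}
    (hi : i ∈ T) (hj : j ∈ T) (hij : i ≠ j) (hija : a i ≤ a j) (k : ℕ) :
    ∑ S ∈ (T.erase j).powersetCard k, ∏ x ∈ S, a x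
      ≤ ∑ S ∈ (T.erase i).powersetCard k, ∏ x ∈ S, a x := by
  cases k with
  | zero => simp
  | succ k =>
    set U := (T.erase i).erase j with hU
    have hjU : j ∉ U := Finset.notMem_erase _ _
    have hU' : (T.erase j).erase i = U := by rw [hU, Finset.erase_right_comm]
    have hiU : i ∉ U := hU' ▸ Finset.notMem_erase _ _
    have h1 : T.erase i = insert j U := by
      rw [hU, Finset.insert_erase (Finset.mem_erase.2 ⟨Ne.symm hij, hj⟩)]
    have h2 : T.erase j = insert i U := by
      rw [← hU', Finset.insert_erase (Finset.mem_erase.2 ⟨hij, hi⟩)]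
    rw [h1, h2, bsw_esymm_insert a hjU, bsw_esymm_insert a hiU]
    have := bsw_esymm_nonneg a ha k U
    nlinarith
end Esymm
section Esymm
variable {ι : Type*} [DecidableEq ι]

lemma bsw_powersetCard_erase {T : Finset ι} {i : ι} (hi : i ∈ T) (k : ℕ) :
    (T.erase i).powersetCard k = (T.powersetCard k).filter (fun S => i ∉ S) := by
  ext S
  simp only [Finset.mem_powersetCard, Finset.mem_filter, Finset.subset_erase]
  tauto

lemma bsw_esymm_succ_eq (a : ι → ℝ) (T : Finset ι) (s : ℕ) :
    ((s+1 : ℕ) : ℝ) * ∑ S ∈ T.powersetCard (s+1), ∏ x ∈ S, a x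
      = ∑ i ∈ T, a i * ∑ S ∈ (T.erase i).powersetCard s, ∏ x ∈ S, a x := by
  have key : ∀ i ∈ T, a i * ∑ S ∈ (T.erase i).powersetCard s, ∏ x ∈ S, a x
      = ∑ R ∈ (T.powersetCard (s+1)).filter (fun R => i ∈ R), ∏ x ∈ R, a x := by
    intro i hi
    rw [Finset.mul_sum]
    refine Finset.sum_nbij' (fun S => insert i S) (fun R => R.erase i) ?_ ?_ ?_ ?_ ?_
    · intro S hS
      obtain ⟨hsub, hcard⟩ := Finset.mem_powersetCard.1 hS
      have hiS : i ∉ S := fun h => (Finset.mem_erase.1 (hsub h)).1 rfl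
      refine Finset.mem_filter.2 ⟨Finset.mem_powersetCard.2 ⟨?_, ?_⟩, Finset.mem_insert_self _ _⟩
      · exact Finset.insert_subset hi (hsub.trans (Finset.erase_subset _ _))
      · rw [Finset.card_insert_of_notMem hiS, hcard]
    · intro R hR
      obtain ⟨hRP, hiR⟩ := Finset.mem_filter.1 hR
      obtain ⟨hsub, hcard⟩ := Finset.mem_powersetCard.1 hRP
      refine Finset.mem_powersetCard.2 ⟨?_, ?_⟩
      · intro x hx
        obtain ⟨hxi, hxR⟩ := Finset.mem_erase.1 hx
        exact Finset.mem_erase.2 ⟨hxi, hsub hxR⟩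
      · rw [Finset.card_erase_of_mem hiR, hcard]
        rfl
    · intro S hS
      obtain ⟨hsub, hcard⟩ := Finset.mem_powersetCard.1 hS
      have hiS : i ∉ S := fun h => (Finset.mem_erase.1 (hsub h)).1 rfl
      exact Finset.erase_insert hiS
    · intro R hR
      exact Finset.insert_erase (Finset.mem_filter.1 hR).2
    · intro S hS
      obtain ⟨hsub, hcard⟩ := Finset.mem_powersetCard.1 hS
      have hiS : i ∉ S := fun h => (Finset.mem_erase.1 (hsub h)).1 rfl
      rw [Finset.prod_insert hiS]
  rw [Finset.sum_congr rfl key]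
  rw [Finset.sum_comm' (t := fun i => (T.powersetCard (s+1)).filter (fun R => i ∈ R))
    (t' := T.powersetCard (s+1)) (s' := fun R => R) ?_]
  · rw [Finset.mul_sum]
    refine Finset.sum_congr rfl fun R hR => ?_
    have hcard : R.card = s + 1 := (Finset.mem_powersetCard.1 hR).2
    rw [Finset.sum_const, ← hcard]
    rw [nsmul_eq_mul]
  · intro i R
    constructor
    · rintro ⟨hiT, hRf⟩
      obtain ⟨hRP, hiR⟩ := Finset.mem_filter.1 hRf
      exact ⟨hiR, hRP⟩
    · rintro ⟨hiR, hRP⟩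
      exact ⟨(Finset.mem_powersetCard.1 hRP).1 hiR, Finset.mem_filter.2 ⟨hRP, hiR⟩⟩

lemma bsw_esymm_erase_sum (a : ι → ℝ) (T : Finset ι) (s : ℕ) :
    ∑ i ∈ T, ∑ S ∈ (T.erase i).powersetCard s, ∏ x ∈ S, a x
      = ((T.card - s : ℕ) : ℝ) * ∑ S ∈ T.powersetCard s, ∏ x ∈ S, a x := by
  have h1 : ∀ i ∈ T, ∑ S ∈ (T.erase i).powersetCard s, ∏ x ∈ S, a x
      = ∑ S ∈ (T.powersetCard s).filter (fun S => i ∉ S), ∏ x ∈ S, a x := by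
    intro i hi; rw [bsw_powersetCard_erase hi]
  rw [Finset.sum_congr rfl h1]
  rw [Finset.sum_comm' (t := fun i => (T.powersetCard s).filter (fun S => i ∉ S))
    (t' := T.powersetCard s) (s' := fun S => T \ S) ?_]
  · rw [Finset.mul_sum]
    refine Finset.sum_congr rfl fun S hS => ?_
    obtain ⟨hsub, hcard⟩ := Finset.mem_powersetCard.1 hS
    rw [Finset.sum_const, Finset.card_sdiff_of_subset hsub, hcard, nsmul_eq_mul]
  · intro i S
    simp only [Finset.mem_filter, Finset.mem_sdiff]
    tauto
end Esymm
section M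
variable {ι : Type*} [DecidableEq ι]

lemma bsw_maclaurin (a : ι → ℝ) (ha : ∀ i, 0 ≤ a i) (T : Finset ι) (hT : T.Nonempty)
    (s : ℕ) :
    ∑ S ∈ T.powersetCard s, ∏ x ∈ S, a x
      ≤ (T.card.choose s : ℝ) * ((∑ i ∈ T, a i) / T.card) ^ s := by
  have hcard : (0 : ℝ) < T.card := by
    exact_mod_cast Finset.card_pos.2 hT
  have hm : 0 ≤ (∑ i ∈ T, a i) / T.card :=
    div_nonneg (Finset.sum_nonneg fun i _ => ha i) hcard.le
  induction s with
  | zero => simp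
  | succ s ih =>
    by_cases hs : s + 1 ≤ T.card
    · -- main case
      have hcheb : (T.card : ℝ) * ∑ i ∈ T, a i * ∑ S ∈ (T.erase i).powersetCard s, ∏ x ∈ S, a x
          ≤ (∑ i ∈ T, a i) * ∑ i ∈ T, ∑ S ∈ (T.erase i).powersetCard s, ∏ x ∈ S, a x := by
        have hanti : AntivaryOn a
            (fun i => ∑ S ∈ (T.erase i).powersetCard s, ∏ x ∈ S, a x) (T : Set ι) := by
          intro i hi j hj hlt
          simp only at hlt
          by_contra hab
          push_neg at hab
          have hij : i ≠ j := by rintro rfl; exact lt_irrefl _ hlt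
          exact absurd hlt (not_lt.2 (bsw_esymm_erase_mono a ha (Finset.mem_coe.1 hi)
            (Finset.mem_coe.1 hj) hij hab.le s))
        exact hanti.card_mul_sum_le_sum_mul_sum
      have h1 := bsw_esymm_succ_eq a T s
      have h2 := bsw_esymm_erase_sum a T s
      have hsub : ((T.card - s : ℕ) : ℝ) = (T.card : ℝ) - s := by
        have : s ≤ T.card := le_trans (Nat.le_succ s) hs
        exact Nat.cast_sub this
      have hns : s ≤ T.card := le_trans (Nat.le_succ s) hs
      have hchoose : ((T.card.choose (s+1)) : ℝ) * ((s:ℝ)+1) = (T.card.choose s : ℝ) * ((T.card : ℝ) - (s:ℝ)) := by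
        have h := Nat.choose_succ_right_eq T.card s
        have h' : ((T.card.choose (s+1) * (s+1) : ℕ) : ℝ) = ((T.card.choose s * (T.card - s) : ℕ) : ℝ) := by
          exact_mod_cast congrArg (Nat.cast (R := ℝ)) h
        push_cast [Nat.cast_sub hns] at h'
        exact h'
      set E1 : ℝ := ∑ S ∈ T.powersetCard (s+1), ∏ x ∈ S, a x with hE1
      set E0 : ℝ := ∑ S ∈ T.powersetCard s, ∏ x ∈ S, a x with hE0
      set m : ℝ := (∑ i ∈ T, a i) / T.card with hmdef
      have hsumam : ∑ i ∈ T, a i = m * T.card := by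
        rw [hmdef]; field_simp
      -- (s+1) E1 ≤ m * (card - s) * E0
      have key : ((s:ℝ)+1) * E1 ≤ m * ((T.card : ℝ) - s) * E0 := by
        have : ((s:ℝ)+1) * E1 = ∑ i ∈ T, a i * ∑ S ∈ (T.erase i).powersetCard s, ∏ x ∈ S, a x := by
          rw [← h1]; push_cast; ring
        rw [this]
        calc ∑ i ∈ T, a i * ∑ S ∈ (T.erase i).powersetCard s, ∏ x ∈ S, a x
            ≤ ((∑ i ∈ T, a i) * ∑ i ∈ T, ∑ S ∈ (T.erase i).powersetCard s, ∏ x ∈ S, a x) / T.card := by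
              rw [le_div_iff₀ hcard]
              calc (∑ i ∈ T, a i * ∑ S ∈ (T.erase i).powersetCard s, ∏ x ∈ S, a x) * T.card
                  = (T.card : ℝ) * ∑ i ∈ T, a i * ∑ S ∈ (T.erase i).powersetCard s, ∏ x ∈ S, a x := by ring
                _ ≤ _ := hcheb
          _ = m * ((T.card : ℝ) - s) * E0 := by
              rw [h2, hsub, hsumam]
              rw [div_eq_iff hcard.ne']
              ring
      have hE0le : E0 ≤ (T.card.choose s : ℝ) * m ^ s := ih
      have hE0nn : 0 ≤ E0 := bsw_esymm_nonneg a ha s T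
      have hms : (0:ℝ) ≤ (T.card : ℝ) - s := by
        have : (s:ℝ) + 1 ≤ T.card := by exact_mod_cast hs
        linarith
      have : ((s:ℝ)+1) * E1 ≤ m * ((T.card:ℝ) - s) * ((T.card.choose s : ℝ) * m ^ s) := by
        calc ((s:ℝ)+1) * E1 ≤ m * ((T.card : ℝ) - s) * E0 := key
          _ ≤ m * ((T.card:ℝ) - s) * ((T.card.choose s : ℝ) * m ^ s) := by
              apply mul_le_mul_of_nonneg_left hE0le (mul_nonneg hm hms)
      have hfin : ((s:ℝ)+1) * E1 ≤ ((s:ℝ)+1) * ((T.card.choose (s+1) : ℝ) * m ^ (s+1)) := by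
        calc ((s:ℝ)+1) * E1 ≤ m * ((T.card:ℝ) - s) * ((T.card.choose s : ℝ) * m ^ s) := this
          _ = ((T.card.choose s : ℝ) * ((T.card : ℝ) - s)) * (m ^ (s+1)) := by ring
          _ = ((T.card.choose (s+1)) : ℝ) * ((s:ℝ)+1) * m ^ (s+1) := by
              rw [← hchoose]
          _ = ((s:ℝ)+1) * ((T.card.choose (s+1) : ℝ) * m ^ (s+1)) := by ring
      have hspos : (0:ℝ) < (s:ℝ)+1 := by positivity
      exact le_of_mul_le_mul_left hfin hspos
    · -- trivial case: powersetCard empty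
      push_neg at hs
      rw [Finset.powersetCard_eq_empty.2 hs]
      simp only [Finset.sum_empty]
      positivity
end M
lemma bsw_exp_neg_le (x : ℝ) (hx : 0 ≤ x) : Real.exp (-x) ≤ 1 - x + x^2/2 := by
  have h := Real.sum_le_exp_of_nonneg hx 3
  have h2 : 1 + x + x^2/2 ≤ Real.exp x := by
    have e : ∑ i ∈ Finset.range 3, x ^ i / (Nat.factorial i) = 1 + x + x^2/2 := by
      simp [Finset.sum_range_succ, Nat.factorial]
      try ring
    rw [e] at h; exact h
  have h1 : Real.exp (-x) * Real.exp x = 1 := by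
    rw [← Real.exp_add]; simp
  nlinarith [Real.exp_pos x, Real.exp_pos (-x), sq_nonneg x, sq_nonneg (x^2),
    mul_le_mul_of_nonneg_left h2 (Real.exp_pos (-x)).le]

lemma bsw_log_ge (u : ℝ) (hu : 0 ≤ u) : 2*u/(2+u) ≤ Real.log (1+u) := by
  set f : ℝ → ℝ := fun x => Real.log (1+x) - 2*x/(2+x) with hf
  have hderiv : ∀ x : ℝ, 0 ≤ x →
      HasDerivAt f ((1+x)⁻¹ - (2*(2+x) - 2*x*1)/(2+x)^2) x := by
    intro x hx
    have h1 : HasDerivAt (fun y : ℝ => 1 + y) 1 x := by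
      simpa using (hasDerivAt_id x).const_add 1
    have hlog : HasDerivAt (fun y : ℝ => Real.log (1+y)) ((1+x)⁻¹) x := by
      have := (Real.hasDerivAt_log (by positivity : (1:ℝ)+x ≠ 0)).comp x h1
      simpa [Function.comp_def] using this
    have hq : HasDerivAt (fun y : ℝ => 2*y/(2+y)) ((2*(2+x) - 2*x*1)/(2+x)^2) x := by
      have hn : HasDerivAt (fun y : ℝ => 2*y) 2 x := by
        simpa using (hasDerivAt_id x).const_mul 2
      have hd : HasDerivAt (fun y : ℝ => 2+y) 1 x := by
        simpa using (hasDerivAt_id x).const_add 2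
      simpa [Pi.div_def] using hn.div hd (by positivity : (2:ℝ)+x ≠ 0)
    exact hlog.sub hq
  have hmono : MonotoneOn f (Set.Ici (0:ℝ)) := by
    apply monotoneOn_of_deriv_nonneg (convex_Ici 0)
    · apply ContinuousOn.sub
      · apply ContinuousOn.log
        · exact (continuous_const.add continuous_id).continuousOn
        · intro x hx
          have : (0:ℝ) ≤ x := hx
          positivity
      · apply ContinuousOn.div
        · exact (continuous_const.mul continuous_id).continuousOn
        · exact (continuous_const.add continuous_id).continuousOn
        · intro x hx
          have : (0:ℝ) ≤ x := hx
          positivity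
    · intro x hx
      rw [interior_Ici] at hx
      exact (hderiv x (le_of_lt hx)).differentiableAt.differentiableWithinAt
    · intro x hx
      rw [interior_Ici] at hx
      have hx0 : (0:ℝ) ≤ x := le_of_lt hx
      rw [(hderiv x hx0).deriv]
      rw [sub_nonneg, inv_eq_one_div, div_le_div_iff₀ (by positivity) (by positivity)]
      nlinarith
  have h0 : f 0 = 0 := by simp [hf]
  have := hmono (Set.self_mem_Ici) (hu : u ∈ Set.Ici 0) hu
  rw [h0] at this
  simp only [hf] at this
  linarith

lemma bsw_exp_interp (y t : ℝ) (hy0 : 0 ≤ y) (hy1 : y ≤ 1) :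
    Real.exp (t * y) ≤ 1 + y * (Real.exp t - 1) := by
  have h := convexOn_exp.2 (Set.mem_univ (0:ℝ)) (Set.mem_univ t)
    (by linarith : (0:ℝ) ≤ 1 - y) hy0 (by ring)
  simp only [smul_eq_mul, mul_zero, zero_add, Real.exp_zero, mul_one] at h
  calc Real.exp (t*y) = Real.exp (y*t) := by rw [mul_comm]
    _ ≤ (1-y) + y * Real.exp t := h
    _ = 1 + y*(Real.exp t - 1) := by ring

lemma bsw_mean_exp_le {n : ℕ} (hn : 0 < n) (Y : Fin n → ℝ) (hY : ∀ i, Y i ∈ Set.Icc (0:ℝ) 1)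
    (μ : ℝ) (hμ : μ = (∑ i, Y i) / n) (t : ℝ) :
    (∑ i, Real.exp (t * Y i)) / n ≤ Real.exp (μ * (Real.exp t - 1)) := by
  have hnn : (0:ℝ) < n := by exact_mod_cast hn
  have hsum : ∑ i, Y i = n * μ := by rw [hμ]; field_simp
  have h1 : ∑ i, Real.exp (t * Y i) ≤ ∑ i : Fin n, (1 + Y i * (Real.exp t - 1)) :=
    Finset.sum_le_sum fun i _ => bsw_exp_interp (Y i) t (hY i).1 (hY i).2
  have h2 : ∑ i : Fin n, (1 + Y i * (Real.exp t - 1)) = n * (1 + μ * (Real.exp t - 1)) := by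
    rw [Finset.sum_add_distrib, ← Finset.sum_mul, hsum, Finset.sum_const,
      Finset.card_univ, Fintype.card_fin, nsmul_eq_mul, mul_one]
    ring
  have h3 : 1 + μ*(Real.exp t - 1) ≤ Real.exp (μ*(Real.exp t - 1)) := by
    have := Real.add_one_le_exp (μ*(Real.exp t - 1)); linarith
  rw [div_le_iff₀ hnn]
  calc ∑ i, Real.exp (t * Y i) ≤ n * (1 + μ * (Real.exp t - 1)) := by rw [← h2]; exact h1
    _ ≤ n * Real.exp (μ*(Real.exp t - 1)) := by nlinarith
    _ = _ := by ring

lemma bsw_chernoff {β : Type*} (P : Finset β) (f : β → ℝ) (c t : ℝ) (ht : 0 < t) :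
    ((P.filter (fun S => c ≤ f S)).card : ℝ) * Real.exp (t*c) ≤ ∑ S ∈ P, Real.exp (t * f S) := by
  calc ((P.filter (fun S => c ≤ f S)).card : ℝ) * Real.exp (t*c)
      = ∑ S ∈ P.filter (fun S => c ≤ f S), Real.exp (t*c) := by
        rw [Finset.sum_const, nsmul_eq_mul]
    _ ≤ ∑ S ∈ P.filter (fun S => c ≤ f S), Real.exp (t * f S) := by
        refine Finset.sum_le_sum fun S hS => ?_
        have := (Finset.mem_filter.1 hS).2
        exact Real.exp_le_exp.2 (mul_le_mul_of_nonneg_left this ht.le)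
    _ ≤ ∑ S ∈ P, Real.exp (t * f S) :=
        Finset.sum_le_sum_of_subset_of_nonneg (Finset.filter_subset _ _)
          (fun S _ _ => (Real.exp_pos _).le)
/-- Bernstein's inequality for sampling without replacement, with the variance
bounded by twice the mean (valid for values in `[0,1]`): if `S` is a uniformly
random `s`-element subset of `{1,…,n}` then
`Pr(|Y_S − sμ| ≥ τ) ≤ 2 exp(−τ²/(4sμ + τ))`. -/
theorem bernstein_sampling_without_replacement
    (n s : ℕ) (hs1 : 1 ≤ s) (hsn : s ≤ n)
    (Y : Fin n → ℝ) (hY : ∀ i, Y i ∈ Set.Icc (0:ℝ) 1)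
    (μ : ℝ) (hμ : μ = (∑ i, Y i) / n)
    (τ : ℝ) (hτ : 0 < τ) :
    ((((Finset.univ : Finset (Fin n)).powersetCard s).filter
        (fun S => τ ≤ |(∑ i ∈ S, Y i) - s * μ|)).card : ℝ) /
      ((((Finset.univ : Finset (Fin n)).powersetCard s).card : ℝ)) ≤
      2 * Real.exp (-(τ ^ 2 / (4 * s * μ + τ))) := by
  have hn : 0 < n := lt_of_lt_of_le hs1 hsn
  have hnR : (0:ℝ) < n := by exact_mod_cast hn
  set P : Finset (Finset (Fin n)) := (Finset.univ : Finset (Fin n)).powersetCard s with hP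
  have hNcard : P.card = n.choose s := by
    rw [hP, Finset.card_powersetCard, Finset.card_univ, Fintype.card_fin]
  have hNpos : (0:ℝ) < P.card := by
    rw [hNcard]
    exact_mod_cast Nat.choose_pos hsn
  have hμ0 : 0 ≤ μ := by
    rw [hμ]
    exact div_nonneg (Finset.sum_nonneg fun i _ => (hY i).1) hnR.le
  have hne : Nonempty (Fin n) := ⟨⟨0, hn⟩⟩
  have huniv : (Finset.univ : Finset (Fin n)).Nonempty := Finset.univ_nonempty
  -- general MGF bound : for any t, ∑_{S∈P} exp(t * Y_S) ≤ N * exp(sμ(e^t − 1))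
  have hMGF : ∀ t : ℝ, ∑ S ∈ P, Real.exp (t * ∑ i ∈ S, Y i)
      ≤ (P.card : ℝ) * Real.exp ((s:ℝ) * (μ * (Real.exp t - 1))) := by
    intro t
    have h1 : ∀ S ∈ P, Real.exp (t * ∑ i ∈ S, Y i) = ∏ i ∈ S, Real.exp (t * Y i) := by
      intro S hS
      rw [Finset.mul_sum, Real.exp_sum]
    rw [Finset.sum_congr rfl h1]
    have h2 := bsw_maclaurin (fun i => Real.exp (t * Y i))
      (fun i => (Real.exp_pos _).le) Finset.univ huniv s
    rw [Finset.card_univ, Fintype.card_fin] at h2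
    have h3 : ((∑ i, Real.exp (t * Y i)) / n) ^ s
        ≤ Real.exp (μ * (Real.exp t - 1)) ^ s := by
      apply pow_le_pow_left₀ (by positivity)
      exact bsw_mean_exp_le hn Y hY μ hμ t
    calc ∑ S ∈ P, ∏ i ∈ S, Real.exp (t * Y i)
        ≤ (n.choose s : ℝ) * ((∑ i, Real.exp (t * Y i)) / n) ^ s := h2
      _ ≤ (n.choose s : ℝ) * Real.exp (μ * (Real.exp t - 1)) ^ s := by
          apply mul_le_mul_of_nonneg_left h3 (by positivity)
      _ = (P.card : ℝ) * Real.exp ((s:ℝ) * (μ * (Real.exp t - 1))) := by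
          rw [hNcard, Real.exp_nat_mul]
  by_cases hμz : μ = 0
  · -- all Y are zero, event is empty
    have hsum0 : ∑ i, Y i = 0 := by
      have h : (∑ i, Y i) / n = 0 := by rw [← hμ, hμz]
      field_simp at h
      simpa using h
    have hYzero : ∀ i ∈ (Finset.univ : Finset (Fin n)), Y i = 0 :=
      (Finset.sum_eq_zero_iff_of_nonneg fun i _ => (hY i).1).1 hsum0
    have hempty : (P.filter (fun S => τ ≤ |(∑ i ∈ S, Y i) - s * μ|)) = ∅ := by
      apply Finset.filter_false_of_mem
      intro S hS
      have hz : ∑ i ∈ S, Y i = 0 :=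
        Finset.sum_eq_zero fun i hi => hYzero i (Finset.mem_univ i)
      rw [hz, hμz]
      simp only [mul_zero, sub_zero, abs_zero]
      exact not_le.2 hτ
    rw [hempty]
    simp only [Finset.card_empty, Nat.cast_zero, zero_div]
    positivity
  · have hμpos : 0 < μ := lt_of_le_of_ne hμ0 (Ne.symm hμz)
    set v : ℝ := (s:ℝ) * μ with hv
    have hsR : (0:ℝ) < s := by exact_mod_cast hs1
    have hvpos : 0 < v := mul_pos hsR hμpos
    have hvne : v ≠ 0 := ne_of_gt hvpos
    have hDpos : 0 < 4 * (s:ℝ) * μ + τ := by positivity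
    set D : ℝ := τ ^ 2 / (4 * (s:ℝ) * μ + τ) with hD
    -- upper tail
    have hupper : ((P.filter (fun S => τ ≤ (∑ i ∈ S, Y i) - v)).card : ℝ)
        ≤ (P.card : ℝ) * Real.exp (-D) := by
      set t : ℝ := Real.log (1 + τ/v) with ht
      have h1v : (1:ℝ) < 1 + τ/v := by
        have : 0 < τ/v := div_pos hτ hvpos
        linarith
      have htpos : 0 < t := Real.log_pos h1v
      have hexpt : Real.exp t = 1 + τ/v := Real.exp_log (by linarith)
      have hfilter : P.filter (fun S => τ ≤ (∑ i ∈ S, Y i) - v)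
          = P.filter (fun S => v + τ ≤ ∑ i ∈ S, Y i) := by
        apply Finset.filter_congr
        intro S hS
        constructor <;> intro h <;> [linarith; linarith]
      rw [hfilter]
      have hch := bsw_chernoff P (fun S => ∑ i ∈ S, Y i) (v + τ) t htpos
      have hch2 : ((P.filter (fun S => v + τ ≤ ∑ i ∈ S, Y i)).card : ℝ) * Real.exp (t*(v+τ))
          ≤ (P.card : ℝ) * Real.exp ((s:ℝ) * (μ * (Real.exp t - 1))) :=
        le_trans hch (hMGF t)
      have hfrac : ((P.filter (fun S => v + τ ≤ ∑ i ∈ S, Y i)).card : ℝ)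
          ≤ (P.card : ℝ) * Real.exp ((s:ℝ) * (μ * (Real.exp t - 1)) - t*(v+τ)) := by
        rw [Real.exp_sub, ← mul_div_assoc, le_div_iff₀ (Real.exp_pos _)]
        exact hch2
      refine le_trans hfrac ?_
      apply mul_le_mul_of_nonneg_left _ hNpos.le
      apply Real.exp_le_exp.2
      -- exponent bound
      have hveq : (s:ℝ) * (μ * (Real.exp t - 1)) = τ := by
        rw [hexpt]
        have h' : (1 : ℝ) + τ/v - 1 = τ/v := by ring
        have hμne : μ ≠ 0 := hμz
        have hsne : (s:ℝ) ≠ 0 := ne_of_gt hsR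
        field_simp [hv]
        try ring
      rw [hveq]
      have hlog : 2*(τ/v)/(2+τ/v) ≤ t := bsw_log_ge (τ/v) (by positivity)
      have h2τv : (0:ℝ) < 2 + τ/v := by positivity
      have hlogval : 2*(τ/v)/(2+τ/v) = 2*τ/(2*v+τ) := by
        rw [div_eq_div_iff (ne_of_gt h2τv) (by positivity : (2*v+τ:ℝ) ≠ 0)]
        field_simp
        try ring
      rw [hlogval] at hlog
      have hstep1 : τ - t*(v+τ) ≤ τ - (2*τ/(2*v+τ))*(v+τ) := by
        have h := mul_le_mul_of_nonneg_right hlog (by positivity : (0:ℝ) ≤ v + τ)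
        linarith
      have hstep2 : τ - (2*τ/(2*v+τ))*(v+τ) = -(τ^2/(2*v+τ)) := by
        field_simp
        ring
      have hstep3 : D ≤ τ^2/(2*v+τ) := by
        rw [hD]
        apply div_le_div_of_nonneg_left (by positivity) (by positivity)
        rw [hv]; nlinarith
      linarith
    -- lower tail
    have hlower : ((P.filter (fun S => τ ≤ v - ∑ i ∈ S, Y i)).card : ℝ)
        ≤ (P.card : ℝ) * Real.exp (-D) := by
      set t : ℝ := τ/v with ht
      have htpos : 0 < t := div_pos hτ hvpos
      have hch := bsw_chernoff P (fun S => v - ∑ i ∈ S, Y i) τ t htpos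
      have hsum : ∑ S ∈ P, Real.exp (t * (v - ∑ i ∈ S, Y i))
          = Real.exp (t*v) * ∑ S ∈ P, Real.exp ((-t) * ∑ i ∈ S, Y i) := by
        rw [Finset.mul_sum]
        refine Finset.sum_congr rfl fun S hS => ?_
        rw [← Real.exp_add]
        congr 1
        ring
      have hch2 : ((P.filter (fun S => τ ≤ v - ∑ i ∈ S, Y i)).card : ℝ) * Real.exp (t*τ)
          ≤ Real.exp (t*v) * ((P.card : ℝ) * Real.exp ((s:ℝ) * (μ * (Real.exp (-t) - 1)))) := by
        refine le_trans hch ?_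
        rw [hsum]
        exact mul_le_mul_of_nonneg_left (hMGF (-t)) (Real.exp_pos _).le
      have hfrac : ((P.filter (fun S => τ ≤ v - ∑ i ∈ S, Y i)).card : ℝ)
          ≤ (P.card : ℝ) * Real.exp (t*v + (s:ℝ) * (μ * (Real.exp (-t) - 1)) - t*τ) := by
        rw [Real.exp_sub, Real.exp_add, ← mul_div_assoc, le_div_iff₀ (Real.exp_pos _)]
        calc _ ≤ Real.exp (t*v) * ((P.card : ℝ) * Real.exp ((s:ℝ) * (μ * (Real.exp (-t) - 1)))) := hch2
          _ = (P.card : ℝ) * (Real.exp (t*v) * Real.exp ((s:ℝ) * (μ * (Real.exp (-t) - 1)))) := by ring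
      refine le_trans hfrac ?_
      apply mul_le_mul_of_nonneg_left _ hNpos.le
      apply Real.exp_le_exp.2
      have hexpneg : Real.exp (-t) ≤ 1 - t + t^2/2 := bsw_exp_neg_le t htpos.le
      have e1 : (s:ℝ) * (μ * (Real.exp (-t) - 1)) ≤ v * (-t + t^2/2) := by
        have : (s:ℝ) * (μ * (Real.exp (-t) - 1)) = v * (Real.exp (-t) - 1) := by
          rw [hv]; ring
        rw [this]
        apply mul_le_mul_of_nonneg_left _ hvpos.le
        linarith
      have e2 : t*v + v*(-t + t^2/2) - t*τ = -(τ^2/(2*v)) := by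
        rw [ht]
        field_simp
        ring
      have e3 : D ≤ τ^2/(2*v) := by
        rw [hD]
        apply div_le_div_of_nonneg_left (by positivity) (by positivity)
        rw [hv]; nlinarith
      linarith
    -- combine
    have hsplit : ((P.filter (fun S => τ ≤ |(∑ i ∈ S, Y i) - s * μ|)).card : ℝ)
        ≤ ((P.filter (fun S => τ ≤ (∑ i ∈ S, Y i) - v)).card : ℝ)
          + ((P.filter (fun S => τ ≤ v - ∑ i ∈ S, Y i)).card : ℝ) := by
      have hsub : P.filter (fun S => τ ≤ |(∑ i ∈ S, Y i) - s * μ|)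
          ⊆ (P.filter (fun S => τ ≤ (∑ i ∈ S, Y i) - v))
            ∪ (P.filter (fun S => τ ≤ v - ∑ i ∈ S, Y i)) := by
        intro S hS
        rw [Finset.mem_filter] at hS
        rcases le_abs.1 hS.2 with h | h
        · exact Finset.mem_union_left _ (Finset.mem_filter.2 ⟨hS.1, by rw [hv]; exact h⟩)
        · refine Finset.mem_union_right _ (Finset.mem_filter.2 ⟨hS.1, ?_⟩)
          rw [hv]; linarith
      calc ((P.filter (fun S => τ ≤ |(∑ i ∈ S, Y i) - s * μ|)).card : ℝ)
          ≤ (((P.filter (fun S => τ ≤ (∑ i ∈ S, Y i) - v))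
              ∪ (P.filter (fun S => τ ≤ v - ∑ i ∈ S, Y i))).card : ℝ) := by
            exact_mod_cast Finset.card_le_card hsub
        _ ≤ _ := by
            exact_mod_cast Finset.card_union_le _ _
    rw [div_le_iff₀ hNpos]
    calc ((P.filter (fun S => τ ≤ |(∑ i ∈ S, Y i) - s * μ|)).card : ℝ)
        ≤ ((P.filter (fun S => τ ≤ (∑ i ∈ S, Y i) - v)).card : ℝ)
          + ((P.filter (fun S => τ ≤ v - ∑ i ∈ S, Y i)).card : ℝ) := hsplit
      _ ≤ (P.card : ℝ) * Real.exp (-D) + (P.card : ℝ) * Real.exp (-D) :=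
          add_le_add hupper hlower
      _ = 2 * Real.exp (-D) * (P.card : ℝ) := by ring
end

section
/- In the packing LP setting with the columns partitioned into K ≥ m one-dimensional classes, assume general position, B ≥ m, and ε ∈ (0,1]. For v ∈ L^K with all B_{i,j}^{v_j} nonempty, let w̲_i^v be the union over j of the inclusion-wise smallest element of B_{i,j}^{v_j}, and w̄_i^v the union over j of the inclusion-wise largest element of B_{i,j}^{v_j} (these exist and are unique since each B_{i,j}^{v_j} is a chain of prefixes of C_j). Define W_i^+ = { w̲_i^v : v ∈ L^K, B_i^v ∩ X ≠ ∅, a_i(w̲_i^v) ≥ (1−ε/2)B } and W_i^- = { w̄_i^v : v ∈ L^K, B_i^v ∩ X ≠ ∅, a_i(w̄_i^v) ≤ (1−3ε/2)B }. Then W_i^+ is a witness set for X_i^+ and W_i^- is a witness set for X_i^-. -/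
open Finset

noncomputable section

lemma mem_classif {n m : ℕ} {π : Fin n → ℝ} {a : Fin n → Fin m → ℝ} {p : Fin m → ℝ}
    {t : Fin n} : t ∈ classif π a p ↔ ∑ i, p i * a t i < π t := by
  simp [classif]

/-- the level of `r` in the geometric grid with base width `c` and ratio `1+δ`. -/
def level (c δ r : ℝ) : ℕ := sInf {ℓ : ℕ | r < c * (1 + δ) ^ ℓ}

lemma level_spec (c δ r : ℝ) (hc : 0 < c) (hδ : 0 < δ) :
    r < c * (1 + δ) ^ (level c δ r) ∧ ∀ k < level c δ r, c * (1 + δ) ^ k ≤ r := by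
  have hne : {ℓ : ℕ | r < c * (1 + δ) ^ ℓ}.Nonempty := by
    obtain ⟨N, hN⟩ := pow_unbounded_of_one_lt (r / c) (by linarith : (1:ℝ) < 1 + δ)
    exact ⟨N, show r < c * (1 + δ) ^ N by
      rw [div_lt_iff₀ hc] at hN; linarith [hN]⟩
  refine ⟨Nat.sInf_mem hne, fun k hk => ?_⟩
  by_contra h
  push_neg at h
  exact absurd (Nat.sInf_le (show k ∈ {ℓ : ℕ | r < c * (1 + δ) ^ ℓ} from h)) (not_le.mpr hk)

lemma level_mem_Ico (c δ r : ℝ) (hc : 0 < c) (hδ : 0 < δ) (hr : 0 ≤ r) :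
    r ∈ (if level c δ r = 0 then Set.Ico 0 c
      else Set.Ico (c * (1 + δ) ^ (level c δ r - 1)) (c * (1 + δ) ^ (level c δ r))) := by
  obtain ⟨hup, hlow⟩ := level_spec c δ r hc hδ
  by_cases h0 : level c δ r = 0
  · rw [if_pos h0]
    rw [h0, pow_zero, mul_one] at hup
    exact ⟨hr, hup⟩
  · rw [if_neg h0]
    exact ⟨hlow _ (Nat.sub_lt (Nat.pos_of_ne_zero h0) Nat.one_pos), hup⟩

lemma Ico_compare (c δ r1 r2 : ℝ) (hc : 0 ≤ c) (hδ : 0 ≤ δ) (hr2 : 0 ≤ r2) (ℓ : ℕ)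
    (h1 : r1 ∈ (if ℓ = 0 then Set.Ico 0 c
      else Set.Ico (c * (1 + δ) ^ (ℓ - 1)) (c * (1 + δ) ^ ℓ)))
    (h2 : r2 ∈ (if ℓ = 0 then Set.Ico 0 c
      else Set.Ico (c * (1 + δ) ^ (ℓ - 1)) (c * (1 + δ) ^ ℓ))) :
    r1 ≤ (1 + δ) * r2 + c := by
  by_cases h0 : ℓ = 0
  · rw [if_pos h0] at h1 h2
    nlinarith [h1.2, mul_nonneg hδ hr2]
  · rw [if_neg h0] at h1 h2
    have hℓ : ℓ - 1 + 1 = ℓ := Nat.succ_pred_eq_of_pos (Nat.pos_of_ne_zero h0)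
    have hu := h1.2
    rw [← hℓ, pow_succ] at hu
    have := mul_le_mul_of_nonneg_right h2.1 (by linarith : (0:ℝ) ≤ 1 + δ)
    nlinarith [hu, this, hc]

lemma level_le (B ε : ℝ) (K : ℕ) (hB : 0 < B) (hε : 0 < ε) (hK : 0 < K)
    (r : ℝ) (hr : r < 2 * B) :
    level (ε * B / (4 * K)) (ε / 4) r ≤ ⌈Real.logb (1 + ε / 4) (8 * K / ε)⌉₊ := by
  have hKR : (0:ℝ) < K := by exact_mod_cast hK
  have hc : 0 < ε * B / (4 * K) := div_pos (mul_pos hε hB) (by linarith)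
  have hδ : (0:ℝ) < ε / 4 := by linarith
  by_contra h
  push_neg at h
  have hlow := (level_spec (ε * B / (4 * K)) (ε / 4) r hc hδ).2 _ h
  have hbase : (1:ℝ) < 1 + ε / 4 := by linarith
  have harg : (0:ℝ) < 8 * K / ε := div_pos (by linarith) hε
  have key : (8 * (K:ℝ) / ε) ≤ (1 + ε / 4) ^ (⌈Real.logb (1 + ε / 4) (8 * K / ε)⌉₊) := by
    calc (8 * (K:ℝ) / ε)
        = (1 + ε / 4) ^ (Real.logb (1 + ε / 4) (8 * K / ε)) :=
          (Real.rpow_logb (by linarith) (by linarith) harg).symm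
      _ ≤ (1 + ε / 4) ^ ((⌈Real.logb (1 + ε / 4) (8 * K / ε)⌉₊ : ℝ)) :=
          Real.rpow_le_rpow_of_exponent_le hbase.le (Nat.le_ceil _)
      _ = (1 + ε / 4) ^ (⌈Real.logb (1 + ε / 4) (8 * K / ε)⌉₊) :=
          Real.rpow_natCast _ _
  have h2B : ε * B / (4 * K) * (8 * K / ε) = 2 * B := by
    field_simp
    ring
  have : 2 * B ≤ r := by
    calc 2 * B = ε * B / (4 * K) * (8 * K / ε) := h2B.symm
      _ ≤ ε * B / (4 * K) * (1 + ε / 4) ^ (⌈Real.logb (1 + ε / 4) (8 * K / ε)⌉₊) :=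
          mul_le_mul_of_nonneg_left key hc.le
      _ ≤ r := hlow
  linarith

lemma sum_parts {n K : ℕ} (C : Fin K → Finset (Fin n))
    (hpart : ∀ u : Fin n, ∃! j : Fin K, u ∈ C j)
    (S : Finset (Fin n)) (g : Fin n → ℝ) :
    ∑ j, ∑ t ∈ S ∩ C j, g t = ∑ t ∈ S, g t := by
  have h1 : ∀ j : Fin K, ∑ t ∈ S ∩ C j, g t = ∑ t ∈ S, if t ∈ C j then g t else 0 := by
    intro j
    rw [← Finset.filter_mem_eq_inter, Finset.sum_filter]
  simp_rw [h1]
  rw [Finset.sum_comm]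
  refine Finset.sum_congr rfl fun t _ => ?_
  obtain ⟨j0, hj0, huniq⟩ := hpart t
  rw [Finset.sum_eq_single_of_mem j0 (Finset.mem_univ j0)
    (fun b _ hb => by
      simp only [ite_eq_right_iff]
      intro hbmem
      exact absurd (huniq b hbmem) hb)]
  simp [hj0]

lemma subset_of_parts {n K : ℕ} (C : Fin K → Finset (Fin n))
    (hpart : ∀ u : Fin n, ∃! j : Fin K, u ∈ C j)
    {S T : Finset (Fin n)} (h : ∀ j, S ∩ C j ⊆ T) : S ⊆ T := by
  intro t ht
  obtain ⟨j, hj, -⟩ := hpart t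
  exact h j (Finset.mem_inter.mpr ⟨ht, hj⟩)

lemma sweep {n m : ℕ} (π : Fin n → ℝ) (a : Fin n → Fin m → ℝ)
    (ha : ∀ t i, a t i ∈ Set.Icc (0:ℝ) 1)
    (B : ℝ) (hB : 0 < B) (hBm : (m : ℝ) ≤ B)
    (hgen : ∀ p : Fin m → ℝ,
      (Finset.univ.filter fun t => π t = ∑ i, p i * a t i).card ≤ m)
    (i : Fin m) :
    ∀ N (p : Fin m → ℝ), (∀ j, 0 ≤ p j) → (classif π a p).card ≤ N →
      B ≤ occ a i (classif π a p) →
      ∃ q : Fin m → ℝ, (∀ j, 0 ≤ q j) ∧ classif π a q ⊆ classif π a p ∧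
        B ≤ occ a i (classif π a q) ∧ occ a i (classif π a q) < 2 * B := by
  intro N
  induction N with
  | zero =>
    intro p hp hcard hocc
    exfalso
    have : classif π a p = ∅ := Finset.card_eq_zero.mp (Nat.le_zero.mp hcard)
    rw [this] at hocc
    simp [occ] at hocc
    linarith
  | succ N ih =>
    intro p hp hcard hocc
    by_cases hlt : occ a i (classif π a p) < 2 * B
    · exact ⟨p, hp, subset_rfl, hocc, hlt⟩
    push_neg at hlt
    set x := classif π a p with hxdef
    set T := x.filter (fun t => 0 < a t i) with hTdef
    have hTne : T.Nonempty := by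
      by_contra h
      rw [Finset.not_nonempty_iff_eq_empty, Finset.filter_eq_empty_iff] at h
      have : occ a i x = 0 := Finset.sum_eq_zero fun t ht =>
        le_antisymm (not_lt.mp (h ht)) (ha t i).1
      rw [this] at hlt; linarith
    set sth : Fin n → ℝ := fun t => (π t - ∑ j, p j * a t j) / a t i with hsth
    set s0 := T.inf' hTne sth with hs0def
    obtain ⟨t0, ht0T, ht0⟩ := T.exists_mem_eq_inf' hTne sth
    have ht0x : t0 ∈ x := (Finset.mem_filter.mp ht0T).1
    have ht0pos : 0 < a t0 i := (Finset.mem_filter.mp ht0T).2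
    have ht0lt : ∑ j, p j * a t0 j < π t0 := mem_classif.mp ht0x
    have hs0pos : 0 < s0 := by
      rw [hs0def, ht0]
      exact div_pos (by linarith) ht0pos
    set q : Fin m → ℝ := fun j => p j + s0 * (if j = i then 1 else 0) with hqdef
    have hq0 : ∀ j, 0 ≤ q j := by
      intro j
      simp only [hqdef]
      split <;> [linarith [hp j]; simp [hp j]]
    have hsumq : ∀ t, ∑ j, q j * a t j = (∑ j, p j * a t j) + s0 * a t i := by
      intro t
      simp only [hqdef, add_mul, Finset.sum_add_distrib]
      congr 1
      rw [Finset.sum_eq_single i]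
      · simp
      · intro b _ hb; simp [hb]
      · simp
    have hsubq : classif π a q ⊆ x := by
      intro t ht
      rw [mem_classif, hsumq] at ht
      have : 0 ≤ s0 * a t i := mul_nonneg hs0pos.le (ha t i).1
      exact mem_classif.mpr (by linarith)
    have ht0not : t0 ∉ classif π a q := by
      rw [mem_classif, hsumq]
      have : s0 * a t0 i = π t0 - ∑ j, p j * a t0 j := by
        rw [hs0def, ht0, hsth]; field_simp
      linarith
    have hcard' : (classif π a q).card ≤ N := by
      have := Finset.card_lt_card ((Finset.ssubset_iff_of_subset hsubq).mpr ⟨t0, ht0x, ht0not⟩)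
      omega
    have hdiffsub : x \ classif π a q ⊆
        Finset.univ.filter (fun t => π t = ∑ j, q j * a t j) := by
      intro t ht
      rw [Finset.mem_sdiff] at ht
      obtain ⟨htx, htq⟩ := ht
      have h1 : ∑ j, p j * a t j < π t := mem_classif.mp htx
      have h2 : π t ≤ ∑ j, p j * a t j + s0 * a t i := by
        by_contra h
        exact htq (mem_classif.mpr (by rw [hsumq]; linarith))
      rcases eq_or_lt_of_le (ha t i).1 with hz | hpos
      · exfalso; rw [← hz] at h2; simp at h2; linarith
      · have htT : t ∈ T := Finset.mem_filter.mpr ⟨htx, hpos⟩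
        have : s0 ≤ sth t := Finset.inf'_le sth htT
        have h3 : s0 * a t i ≤ π t - ∑ j, p j * a t j := by
          rw [hsth] at this
          calc s0 * a t i ≤ (π t - ∑ j, p j * a t j) / a t i * a t i :=
                mul_le_mul_of_nonneg_right this (ha t i).1
            _ = π t - ∑ j, p j * a t j := by field_simp
        simp only [Finset.mem_filter, Finset.mem_univ, true_and]
        rw [hsumq]; linarith
    have hdrop : occ a i x - occ a i (classif π a q) ≤ m := by
      have hsplit : occ a i (classif π a q) + ∑ t ∈ x \ classif π a q, a t i = occ a i x := by
        rw [occ, occ, add_comm]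
        exact Finset.sum_sdiff hsubq
      have hcardd : (x \ classif π a q).card ≤ m :=
        le_trans (Finset.card_le_card hdiffsub) (hgen q)
      have : ∑ t ∈ x \ classif π a q, a t i ≤ (x \ classif π a q).card * 1 := by
        rw [← nsmul_eq_mul]
        exact Finset.sum_le_card_nsmul _ _ 1 fun t _ => (ha t i).2
      have hcardd' : ((x \ classif π a q).card : ℝ) ≤ m := by exact_mod_cast hcardd
      nlinarith
    have hoccq : B ≤ occ a i (classif π a q) := by linarith
    obtain ⟨q', h1, h2, h3, h4⟩ := ih q hq0 hcard' hoccq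
    exact ⟨q', h1, h2.trans hsubq, h3, h4⟩

/-- The families `W_i^+` and `W_i^-` built from the smallest/largest elements
of the nonempty boxes `B_i^v` are witness sets for `X_i^+` and `X_i^-`. -/
theorem box_extremes_are_witness_sets
    (n m K : ℕ) (hn : 1 ≤ n) (hm : 1 ≤ m) (hK : m ≤ K)
    (π : Fin n → ℝ) (hπ : ∀ t, 0 ≤ π t)
    (a : Fin n → Fin m → ℝ) (ha : ∀ t i, a t i ∈ Set.Icc (0:ℝ) 1)
    (ha0 : ∀ t, a t ≠ 0)
    (B : ℝ) (hB : 0 < B) (hBm : (m : ℝ) ≤ B)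
    (ε : ℝ) (hε : ε ∈ Set.Ioc (0:ℝ) 1)
    (hgen : ∀ p : Fin m → ℝ,
      (Finset.univ.filter fun t => π t = ∑ i, p i * a t i).card ≤ m)
    (C : Fin K → Finset (Fin n))
    (hpart : ∀ u : Fin n, ∃! j : Fin K, u ∈ C j)
    (hdir : ∀ j : Fin K, ∃ cdir : Fin m → ℝ, ‖cdir‖ = 1 ∧
      ∀ t ∈ C j, a t = ‖a t‖ • cdir)
    (hord : ∀ j : Fin K, ∀ t ∈ C j, ∀ t' ∈ C j, t < t' →
      π t' / ‖a t'‖ ≤ π t / ‖a t‖)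
    (i : Fin m) :
    letI Lmax : ℕ := ⌈Real.logb (1 + ε / 4) (8 * K / ε)⌉₊
    letI Ival : ℕ → Set ℝ := fun ℓ =>
      if ℓ = 0 then Set.Ico 0 (ε * B / (4 * K))
      else Set.Ico (ε * B / (4 * K) * (1 + ε / 4) ^ (ℓ - 1))
        (ε * B / (4 * K) * (1 + ε / 4) ^ ℓ)
    letI XX : Set (Finset (Fin n)) :=
      {x | ∃ p : Fin m → ℝ, (∀ j, 0 ≤ p j) ∧ x = classif π a p}
    letI Bij : Fin K → ℕ → Set (Finset (Fin n)) := fun j ℓ =>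
      {y | (∃ x ∈ XX, y = x ∩ C j) ∧ occ a i y ∈ Ival ℓ}
    ∀ wlow whigh : (Fin K → ℕ) → Finset (Fin n),
    -- `wlow v` is the union over `j` of the inclusion-wise smallest element of
    -- `B_{i,j}^{v_j}` (characterized classwise, since the `C j` partition the
    -- index set):
    (∀ v : Fin K → ℕ, (∀ j, (Bij j (v j)).Nonempty) →
      ∀ j : Fin K, wlow v ∩ C j ∈ Bij j (v j) ∧
        ∀ z ∈ Bij j (v j), wlow v ∩ C j ⊆ z) →
    -- `whigh v` is the union over `j` of the inclusion-wise largest element: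
    (∀ v : Fin K → ℕ, (∀ j, (Bij j (v j)).Nonempty) →
      ∀ j : Fin K, whigh v ∩ C j ∈ Bij j (v j) ∧
        ∀ z ∈ Bij j (v j), z ⊆ whigh v ∩ C j) →
    letI Wp : Set (Finset (Fin n)) :=
      {w | ∃ v : Fin K → ℕ, (∀ j, v j ≤ Lmax) ∧
        (∃ x ∈ XX, ∀ j, x ∩ C j ∈ Bij j (v j)) ∧
        (1 - ε / 2) * B ≤ occ a i (wlow v) ∧ w = wlow v}
    letI Wm : Set (Finset (Fin n)) :=
      {w | ∃ v : Fin K → ℕ, (∀ j, v j ≤ Lmax) ∧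
        (∃ x ∈ XX, ∀ j, x ∩ C j ∈ Bij j (v j)) ∧
        occ a i (whigh v) ≤ (1 - 3 * ε / 2) * B ∧ w = whigh v}
    -- `Wp` is a witness set for `X_i^+` and `Wm` is a witness set for `X_i^-`:
    ((∀ w ∈ Wp, (1 - ε / 2) * B ≤ occ a i w) ∧
      (∀ x ∈ XX, B < occ a i x → ∃ w ∈ Wp, w ⊆ x)) ∧
    ((∀ w ∈ Wm, occ a i w ≤ (1 - 3 * ε / 2) * B) ∧
      (∀ x ∈ XX, occ a i x < (1 - 3 * ε) * B → ∃ w ∈ Wm, x ⊆ w)) := by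
  obtain ⟨hεpos, hε1⟩ := hε
  have hKnat : 0 < K := by omega
  have hKR : (0:ℝ) < K := by exact_mod_cast hKnat
  have hKne : (K:ℝ) ≠ 0 := ne_of_gt hKR
  intro wlow whigh hwlow hwhigh
  set Lmax : ℕ := ⌈Real.logb (1 + ε / 4) (8 * K / ε)⌉₊ with hLmaxdef
  set Ival : ℕ → Set ℝ := fun ℓ =>
    if ℓ = 0 then Set.Ico 0 (ε * B / (4 * K))
    else Set.Ico (ε * B / (4 * K) * (1 + ε / 4) ^ (ℓ - 1))
      (ε * B / (4 * K) * (1 + ε / 4) ^ ℓ) with hIvaldef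
  set XX : Set (Finset (Fin n)) :=
    {x | ∃ p : Fin m → ℝ, (∀ j, 0 ≤ p j) ∧ x = classif π a p} with hXXdef
  set Bij : Fin K → ℕ → Set (Finset (Fin n)) := fun j ℓ =>
    {y | (∃ x ∈ XX, y = x ∩ C j) ∧ occ a i y ∈ Ival ℓ} with hBijdef
  have hδ : (0:ℝ) < ε / 4 := by linarith
  have hcpos : 0 < ε * B / (4 * K) := div_pos (mul_pos hεpos hB) (by linarith)
  have hocc0 : ∀ S : Finset (Fin n), 0 ≤ occ a i S := fun S =>
    Finset.sum_nonneg fun t _ => (ha t i).1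
  have hoccmono : ∀ S T : Finset (Fin n), S ⊆ T → occ a i S ≤ occ a i T := fun S T h =>
    Finset.sum_le_sum_of_subset_of_nonneg h fun t _ _ => (ha t i).1
  have hoccparts : ∀ S : Finset (Fin n), ∑ j, occ a i (S ∩ C j) = occ a i S := fun S =>
    sum_parts C hpart S _
  have hmemI : ∀ r : ℝ, 0 ≤ r → r ∈ Ival (level (ε * B / (4 * K)) (ε / 4) r) := by
    intro r hr
    exact level_mem_Ico (ε * B / (4 * K)) (ε / 4) r hcpos hδ hr
  have hcmp : ∀ (ℓ : ℕ) (r1 r2 : ℝ), 0 ≤ r2 → r1 ∈ Ival ℓ → r2 ∈ Ival ℓ →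
      r1 ≤ (1 + ε / 4) * r2 + ε * B / (4 * K) := fun ℓ r1 r2 h2 hm1 hm2 =>
    Ico_compare _ _ _ _ hcpos.le hδ.le h2 ℓ hm1 hm2
  have hlevle : ∀ r : ℝ, r < 2 * B → level (ε * B / (4 * K)) (ε / 4) r ≤ Lmax :=
    fun r h2 => level_le B ε K hB hεpos hKnat r h2
  have hest : ∀ (v : Fin K → ℕ) (S W : Finset (Fin n)),
      (∀ j, occ a i (S ∩ C j) ∈ Ival (v j)) → (∀ j, occ a i (W ∩ C j) ∈ Ival (v j)) →
      occ a i S ≤ (1 + ε / 4) * occ a i W + ε * B / 4 := by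
    intro v S W hS hW
    rw [← hoccparts S, ← hoccparts W]
    calc ∑ j, occ a i (S ∩ C j)
        ≤ ∑ j : Fin K, ((1 + ε / 4) * occ a i (W ∩ C j) + ε * B / (4 * K)) :=
          Finset.sum_le_sum fun j _ => hcmp (v j) _ _ (hocc0 _) (hS j) (hW j)
      _ = (1 + ε / 4) * (∑ j, occ a i (W ∩ C j)) + ε * B / 4 := by
          rw [Finset.sum_add_distrib, ← Finset.mul_sum, Finset.sum_const,
            Finset.card_univ, Fintype.card_fin, nsmul_eq_mul]
          have hKc : (K:ℝ) * (ε * B / (4 * K)) = ε * B / 4 := by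
            field_simp
          rw [hKc]
  refine ⟨⟨?_, ?_⟩, ?_, ?_⟩
  · -- Wp lower bounds
    intro w hw
    obtain ⟨v, -, -, hge, rfl⟩ := hw
    exact hge
  · -- Wp covers X_i^+
    intro x hx hBx
    obtain ⟨p, hp, rfl⟩ := hx
    obtain ⟨q, hq0, hqsub, hqB, hq2B⟩ :=
      sweep π a ha B hB hBm hgen i (classif π a p).card p hp le_rfl hBx.le
    set v : Fin K → ℕ :=
      fun j => level (ε * B / (4 * K)) (ε / 4) (occ a i (classif π a q ∩ C j)) with hvdef
    have hx'XX : classif π a q ∈ XX := ⟨q, hq0, rfl⟩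
    have hx'mem : ∀ j, classif π a q ∩ C j ∈ Bij j (v j) := fun j =>
      ⟨⟨classif π a q, hx'XX, rfl⟩, hmemI _ (hocc0 _)⟩
    have hne : ∀ j, (Bij j (v j)).Nonempty := fun j => ⟨_, hx'mem j⟩
    have hwl := hwlow v hne
    have hvle : ∀ j, v j ≤ Lmax := fun j =>
      hlevle _ (lt_of_le_of_lt (hoccmono _ _ Finset.inter_subset_left) hq2B)
    have hkey : occ a i (classif π a q) ≤ (1 + ε / 4) * occ a i (wlow v) + ε * B / 4 :=
      hest v _ _ (fun j => (hx'mem j).2) (fun j => ((hwl j).1).2)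
    have hWge : (1 - ε / 2) * B ≤ occ a i (wlow v) := by
      nlinarith [hocc0 (wlow v), mul_pos hεpos hB, sq_nonneg ε,
        mul_nonneg (mul_nonneg hεpos.le hεpos.le) hB.le]
    refine ⟨wlow v, ⟨v, hvle, ⟨classif π a q, hx'XX, hx'mem⟩, hWge, rfl⟩, ?_⟩
    exact subset_of_parts C hpart fun j =>
      ((hwl j).2 _ (hx'mem j)).trans (Finset.inter_subset_left.trans hqsub)
  · -- Wm upper bounds
    intro w hw
    obtain ⟨v, -, -, hle, rfl⟩ := hw
    exact hle
  · -- Wm covers X_i^-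
    intro x hx hless
    obtain ⟨p, hp, rfl⟩ := hx
    set v : Fin K → ℕ :=
      fun j => level (ε * B / (4 * K)) (ε / 4) (occ a i (classif π a p ∩ C j)) with hvdef
    have hxXX : classif π a p ∈ XX := ⟨p, hp, rfl⟩
    have hxmem : ∀ j, classif π a p ∩ C j ∈ Bij j (v j) := fun j =>
      ⟨⟨classif π a p, hxXX, rfl⟩, hmemI _ (hocc0 _)⟩
    have hne : ∀ j, (Bij j (v j)).Nonempty := fun j => ⟨_, hxmem j⟩
    have hwh := hwhigh v hne
    have hvle : ∀ j, v j ≤ Lmax := fun j => by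
      refine hlevle _ (lt_of_le_of_lt (hoccmono _ _ Finset.inter_subset_left) ?_)
      nlinarith [mul_pos hεpos hB]
    have hkey : occ a i (whigh v) ≤ (1 + ε / 4) * occ a i (classif π a p) + ε * B / 4 :=
      hest v _ _ (fun j => ((hwh j).1).2) (fun j => (hxmem j).2)
    have hWle : occ a i (whigh v) ≤ (1 - 3 * ε / 2) * B := by
      nlinarith [mul_pos hεpos hB, hocc0 (classif π a p),
        mul_lt_mul_of_pos_left hless (show (0:ℝ) < 1 + ε / 4 by linarith),
        mul_nonneg (mul_nonneg hεpos.le hεpos.le) hB.le]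
    refine ⟨whigh v, ⟨v, hvle, ⟨classif π a p, hxXX, hxmem⟩, hWle, rfl⟩, ?_⟩
    exact subset_of_parts C hpart fun j =>
      ((hwh j).2 _ (hxmem j)).trans Finset.inter_subset_left


end
end

section
/- In the packing LP setting with general position, let i ∈ {1,…,m} and let p ∈ ℝ^m with p ≥ 0 be such that a_i(x(p)) > B. Then there exists λ ≥ 0 such that, setting q = p + λ·e_i (where e_i is the i-th standard basis vector), one has x(q) ⊆ x(p) and B ≤ a_i(x(q)) ≤ B + m. -/
open Finset

noncomputable section

lemma sum_q {n m : ℕ} (a : Fin n → Fin m → ℝ) (p : Fin m → ℝ) (lam : ℝ) (i : Fin m) (t : Fin n) :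
    ∑ j, (p + lam • (Pi.single i 1 : Fin m → ℝ)) j * a t j = (∑ j, p j * a t j) + lam * a t i := by
  simp [add_mul, Finset.sum_add_distrib, Pi.single_apply, mul_ite, ite_mul, mul_assoc]

lemma mem_classif_q {n m : ℕ} (π : Fin n → ℝ) (a : Fin n → Fin m → ℝ) (p : Fin m → ℝ)
    (lam : ℝ) (i : Fin m) (t : Fin n) :
    t ∈ classif π a (p + lam • (Pi.single i 1 : Fin m → ℝ)) ↔
      (∑ j, p j * a t j) + lam * a t i < π t := by
  rw [classif, mem_filter, sum_q]
  simp

/-- Raising the `i`-th price: under the general position assumption, if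
`a_i(x(p)) > B` one can increase the `i`-th coordinate of `p` by some `λ ≥ 0`
so that the new classification is contained in `x(p)` and its `i`-th occupation
lands in `[B, B + m]`. -/
theorem price_raise_lands_near_budget
    (n m : ℕ) (hn : 1 ≤ n) (hm : 1 ≤ m)
    (π : Fin n → ℝ) (hπ : ∀ t, 0 ≤ π t)
    (a : Fin n → Fin m → ℝ) (ha : ∀ t i, a t i ∈ Set.Icc (0:ℝ) 1)
    (ha0 : ∀ t, a t ≠ 0)
    (B : ℝ) (hB : 0 < B)
    (hgen : ∀ p : Fin m → ℝ,
      (Finset.univ.filter fun t => π t = ∑ i, p i * a t i).card ≤ m)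
    (i : Fin m) (p : Fin m → ℝ) (hp : ∀ j, 0 ≤ p j)
    (hbig : B < occ a i (classif π a p)) :
    ∃ lam : ℝ, 0 ≤ lam ∧
      classif π a (p + lam • (Pi.single i 1 : Fin m → ℝ)) ⊆ classif π a p ∧
      B ≤ occ a i (classif π a (p + lam • (Pi.single i 1 : Fin m → ℝ))) ∧
      occ a i (classif π a (p + lam • (Pi.single i 1 : Fin m → ℝ))) ≤ B + m := by
  classical
  set c : Fin n → ℝ := fun t => ∑ j, p j * a t j with hc
  -- the classification at price p + κ e_i
  set X : ℝ → Finset (Fin n) :=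
    fun κ => classif π a (p + κ • (Pi.single i 1 : Fin m → ℝ)) with hX
  have hXmem : ∀ κ t, t ∈ X κ ↔ c t + κ * a t i < π t := by
    intro κ t; exact mem_classif_q π a p κ i t
  have hX0 : X 0 = classif π a p := by
    simp [hX]
  have hXsub : ∀ κ, 0 ≤ κ → X κ ⊆ classif π a p := by
    intro κ hκ t ht
    rw [hXmem] at ht
    have h1 : 0 ≤ κ * a t i := mul_nonneg hκ (ha t i).1
    simp only [classif, mem_filter, mem_univ, true_and]
    linarith
  have hXmono : ∀ κ μ : ℝ, κ ≤ μ → X μ ⊆ X κ := by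
    intro κ μ hκμ t ht
    rw [hXmem] at ht ⊢
    have : κ * a t i ≤ μ * a t i := mul_le_mul_of_nonneg_right hκμ (ha t i).1
    linarith
  -- jump points
  set Λ : Finset ℝ :=
    ((classif π a p).filter (fun t => 0 < a t i)).image (fun t => (π t - c t) / a t i) with hΛ
  have hΛpos : ∀ x ∈ Λ, 0 < x := by
    intro x hx
    rw [hΛ, mem_image] at hx
    obtain ⟨t, ht, rfl⟩ := hx
    rw [mem_filter] at ht
    have htc : c t < π t := by
      have := ht.1; simp only [classif, mem_filter, mem_univ, true_and] at this; exact this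
    exact div_pos (by linarith) ht.2
  have hΛne : Λ.Nonempty := by
    by_contra h
    rw [Finset.not_nonempty_iff_eq_empty] at h
    have : occ a i (classif π a p) ≤ 0 := by
      apply Finset.sum_nonpos
      intro t ht
      by_contra hpos
      push_neg at hpos
      have : (π t - c t) / a t i ∈ Λ := by
        rw [hΛ, mem_image]
        exact ⟨t, by rw [mem_filter]; exact ⟨ht, hpos⟩, rfl⟩
      simp [h] at this
    linarith
  -- key: membership in X κ for t with a t i > 0
  have hXiff : ∀ κ t, 0 < a t i → (t ∈ X κ ↔ κ < (π t - c t) / a t i) := by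
    intro κ t hti
    rw [hXmem, lt_div_iff₀ hti]
    constructor <;> intro h <;> linarith
  -- at λmax the occupation is 0
  have hmax : occ a i (X (Λ.max' hΛne)) ≤ B := by
    have : occ a i (X (Λ.max' hΛne)) ≤ 0 := by
      apply Finset.sum_nonpos
      intro t ht
      by_contra hpos
      push_neg at hpos
      have hmem := (hXiff _ t hpos).1 ht
      have htp : t ∈ classif π a p := hXsub _ (le_of_lt (hΛpos _ (Λ.max'_mem hΛne))) ht
      have : (π t - c t) / a t i ∈ Λ := by
        rw [hΛ, mem_image]; exact ⟨t, by rw [mem_filter]; exact ⟨htp, hpos⟩, rfl⟩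
      have := Λ.le_max' _ this
      linarith
    linarith
  -- λ* : minimal jump point with occupation ≤ B
  set G : Finset ℝ := Λ.filter (fun κ => occ a i (X κ) ≤ B) with hG
  have hGne : G.Nonempty := ⟨Λ.max' hΛne, by rw [hG, mem_filter]; exact ⟨Λ.max'_mem hΛne, hmax⟩⟩
  obtain ⟨ls, hls⟩ : ∃ x : ℝ, x = G.min' hGne := ⟨_, rfl⟩
  have hlsG : ls ∈ G := hls ▸ G.min'_mem hGne
  have hlsΛ : ls ∈ Λ := (mem_filter.1 hlsG).1
  have hlsB : occ a i (X ls) ≤ B := (mem_filter.1 hlsG).2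
  have hlsmin : ∀ x ∈ G, ls ≤ x := fun x hx => hls ▸ G.min'_le x hx
  have hlspos : 0 < ls := hΛpos _ hlsΛ
  -- λ' : largest point of Λ ∪ {0} below λ*
  set Λ' : Finset ℝ := insert 0 (Λ.filter (fun κ => κ < ls)) with hΛ'
  have hΛ'ne : Λ'.Nonempty := ⟨0, mem_insert_self _ _⟩
  obtain ⟨lp, hlp⟩ : ∃ x : ℝ, x = Λ'.max' hΛ'ne := ⟨_, rfl⟩
  have hlpmem : lp ∈ Λ' := hlp ▸ Λ'.max'_mem hΛ'ne
  have hlpmax : ∀ x ∈ Λ', x ≤ lp := fun x hx => hlp ▸ Λ'.le_max' x hx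
  have hlp0 : (0:ℝ) ≤ lp := hlpmax 0 (mem_insert_self _ _)
  have hlplt : lp < ls := by
    have := hlpmem
    rw [hΛ', mem_insert] at this
    rcases this with h | h
    · rw [h]; exact hlspos
    · exact (mem_filter.1 h).2
  -- B < occ at λ'
  have hlpB : B < occ a i (X lp) := by
    have := hlpmem
    rw [hΛ', mem_insert] at this
    rcases this with h | h
    · rw [h, hX0]; exact hbig
    · rw [mem_filter] at h
      by_contra hle
      push_neg at hle
      have hG2 : lp ∈ G := by rw [hG, mem_filter]; exact ⟨h.1, hle⟩
      have := hlsmin _ hG2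
      linarith
  -- the dropped set is contained in the equality set at λ*
  have hsub2 : X ls ⊆ X lp := hXmono _ _ (le_of_lt hlplt)
  set E : Finset (Fin n) := Finset.univ.filter
    (fun t => π t = ∑ j, (p + ls • (Pi.single i 1 : Fin m → ℝ)) j * a t j) with hE
  have hdrop : X lp \ X ls ⊆ E := by
    intro t ht
    rw [mem_sdiff] at ht
    obtain ⟨h1, h2⟩ := ht
    rw [hXmem] at h1 h2
    push_neg at h2
    have hti : 0 < a t i := by
      rcases lt_or_eq_of_le (ha t i).1 with h | h
      · exact h
      · exfalso; rw [← h] at h1 h2; simp at h1 h2; linarith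
    have htp : t ∈ classif π a p := hXsub lp hlp0 ((hXmem lp t).2 h1)
    have hmemΛ : (π t - c t) / a t i ∈ Λ := by
      rw [hΛ, mem_image]; exact ⟨t, by rw [mem_filter]; exact ⟨htp, hti⟩, rfl⟩
    have hgt : lp < (π t - c t) / a t i := by rw [lt_div_iff₀ hti]; linarith
    have hle2 : (π t - c t) / a t i ≤ ls := by rw [div_le_iff₀ hti]; linarith
    have heq : (π t - c t) / a t i = ls := by
      rcases lt_or_eq_of_le hle2 with h | h
      · exfalso
        have hm' : (π t - c t) / a t i ∈ Λ' := by
          rw [hΛ', mem_insert]; right; rw [mem_filter]; exact ⟨hmemΛ, h⟩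
        have := hlpmax _ hm'
        linarith
      · exact h
    have hkey : π t - c t = ls * a t i := (div_eq_iff (ne_of_gt hti)).1 heq
    rw [hE, mem_filter]
    refine ⟨mem_univ t, ?_⟩
    rw [sum_q]
    have hct : c t = ∑ j, p j * a t j := rfl
    rw [← hct]; linarith
  -- the occupation drop is at most m
  have hEcard : (E.card : ℝ) ≤ m := by exact_mod_cast hgen _
  have hocc_split : occ a i (X lp) = occ a i (X ls) + ∑ t ∈ X lp \ X ls, a t i := by
    rw [occ, occ, ← Finset.sum_sdiff hsub2]; ring
  have hdropsum : ∑ t ∈ X lp \ X ls, a t i ≤ m := by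
    calc ∑ t ∈ X lp \ X ls, a t i ≤ ∑ _t ∈ X lp \ X ls, (1:ℝ) :=
          Finset.sum_le_sum (fun t _ => (ha t i).2)
      _ = ((X lp \ X ls).card : ℝ) := by simp
      _ ≤ (E.card : ℝ) := by exact_mod_cast Finset.card_le_card hdrop
      _ ≤ m := hEcard
  refine ⟨lp, hlp0, hXsub lp hlp0, le_of_lt hlpB, ?_⟩
  have : occ a i (X lp) ≤ B + m := by rw [hocc_split]; linarith
  exact this

end
end
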